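/- Characterization for symmetric invariance: For n ≥ 2, 2 ≤ u ≤ n and k ≥ 1, there exists an S_n-invariant distinct DNF tautology on n variables with all cube lengths between k and u if and only if k ≤ min(u − 1, n/2) (floor division). -/

import Mathlib

abbrev Cube (n : ℕ) := Finset (Fin n) × (Fin n → Bool)

def Sat {n : ℕ} (a : Fin n → Bool) (c : Cube n) : Prop :=
  ∀ i ∈ c.1, a i = c.2 i

def DistinctDNF {n : ℕ} (D : Finset (Cube n)) : Prop :=
  ∀ c ∈ D, ∀ c' ∈ D, c.1 = c'.1 → c = c'

def Tauto {n : ℕ} (D : Finset (Cube n)) : Prop :=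
  ∀ a : Fin n → Bool, ∃ c ∈ D, Sat a c

def MemUpTo {n : ℕ} (D : Finset (Cube n)) (c : Cube n) : Prop :=
  ∃ c' ∈ D, c'.1 = c.1 ∧ ∀ i ∈ c.1, c'.2 i = c.2 i

def permCube {n : ℕ} (σ : Equiv.Perm (Fin n)) (c : Cube n) : Cube n :=
  (c.1.image σ, c.2 ∘ σ.symm)

lemma exists_perm_image {n : ℕ} (A B : Finset (Fin n)) (h : A.card = B.card) :
    ∃ σ : Equiv.Perm (Fin n), A.image σ = B := by
  classical
  have h' : (Aᶜ).card = (Bᶜ).card := by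
    simp [Finset.card_compl, h]
  let e : {x // x ∈ A} ≃ {x // x ∈ B} := Finset.equivOfCardEq h
  let f : {x // x ∈ Aᶜ} ≃ {x // x ∈ Bᶜ} := Finset.equivOfCardEq h'
  let f' : {x // ¬ x ∈ A} ≃ {x // ¬ x ∈ B} :=
    (Equiv.subtypeEquivRight (fun x => by simp)).trans
      (f.trans (Equiv.subtypeEquivRight (fun x => by simp)))
  let σ : Equiv.Perm (Fin n) := Equiv.subtypeCongr e f'
  refine ⟨σ, ?_⟩
  have hsub : A.image σ ⊆ B := by
    intro y hy
    obtain ⟨x, hx, rfl⟩ := Finset.mem_image.mp hy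
    have : σ x = e ⟨x, hx⟩ := by
      simp [σ, Equiv.subtypeCongr, Equiv.sumCompl_symm_apply_of_pos hx]
    rw [this]
    exact (e ⟨x, hx⟩).2
  have hcard : B.card ≤ (A.image σ).card := by
    rw [Finset.card_image_of_injective _ σ.injective, h]
  exact Finset.eq_of_subset_of_card_le hsub hcard

lemma constOnSupport {n : ℕ} {D : Finset (Cube n)} (hdist : DistinctDNF D)
    (hinv : ∀ σ : Equiv.Perm (Fin n), ∀ c ∈ D, MemUpTo D (permCube σ c))
    {c : Cube n} (hc : c ∈ D) {i j : Fin n} (hi : i ∈ c.1) (hj : j ∈ c.1) :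
    c.2 i = c.2 j := by
  obtain ⟨c', hc', h1, h2⟩ := hinv (Equiv.swap i j) c hc
  have himg : c.1.image (Equiv.swap i j) = c.1 := by
    apply Finset.eq_of_subset_of_card_le
    · intro x hx
      obtain ⟨y, hy, rfl⟩ := Finset.mem_image.mp hx
      rcases eq_or_ne y i with rfl | hyi
      · simpa [Equiv.swap_apply_left] using hj
      rcases eq_or_ne y j with rfl | hyj
      · simpa [Equiv.swap_apply_right] using hi
      · simpa [Equiv.swap_apply_of_ne_of_ne hyi hyj] using hy
    · rw [Finset.card_image_of_injective _ (Equiv.injective _)]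
  have h1' : c'.1 = c.1 := by
    rw [h1]; exact himg
  have hceq : c' = c := hdist c' hc' c hc h1'
  have hiimg : i ∈ (permCube (Equiv.swap i j) c).1 := by
    show i ∈ c.1.image _
    rw [himg]; exact hi
  have := h2 i hiimg
  rw [hceq] at this
  simpa [permCube, Equiv.swap_apply_left] using this

lemma sizesDiffer {n : ℕ} {D : Finset (Cube n)} (hdist : DistinctDNF D)
    (hinv : ∀ σ : Equiv.Perm (Fin n), ∀ c ∈ D, MemUpTo D (permCube σ c))
    {c d : Cube n} (hc : c ∈ D) (hd : d ∈ D) {i j : Fin n}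
    (hi : i ∈ c.1) (hit : c.2 i = true) (hj : j ∈ d.1) (hjf : d.2 j = false) :
    c.1.card ≠ d.1.card := by
  intro hcard
  obtain ⟨σ, himg⟩ := exists_perm_image c.1 d.1 hcard
  obtain ⟨c', hc', h1, h2⟩ := hinv σ c hc
  have h1' : c'.1 = d.1 := by
    rw [h1]; exact himg
  have hceq : c' = d := hdist c' hc' d hd h1'
  have hσi : σ i ∈ (permCube σ c).1 := by
    show σ i ∈ c.1.image _
    exact Finset.mem_image_of_mem _ hi
  have := h2 (σ i) hσi
  rw [hceq] at this
  have hval : d.2 (σ i) = true := by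
    simpa [permCube, hit] using this
  have hσid : σ i ∈ d.1 := by rw [← himg]; exact Finset.mem_image_of_mem _ hi
  have := constOnSupport hdist hinv hd hσid hj
  rw [hval, hjf] at this
  exact Bool.noConfusion this

theorem stmt16 (n u k : ℕ) (hn : 2 ≤ n) (hu2 : 2 ≤ u) (hun : u ≤ n) (hk1 : 1 ≤ k) :
    (∃ D : Finset (Cube n), DistinctDNF D ∧ Tauto D ∧
      (∀ σ : Equiv.Perm (Fin n), ∀ c ∈ D, MemUpTo D (permCube σ c)) ∧
      ∀ c ∈ D, k ≤ c.1.card ∧ c.1.card ≤ u)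
    ↔ k ≤ min (u - 1) (n / 2) := by
  classical
  constructor
  · rintro ⟨D, hdist, htauto, hinv, hsize⟩
    obtain ⟨c₁, hc₁, hs₁⟩ := htauto (fun _ => true)
    set P := D.filter (fun c => ∀ i ∈ c.1, c.2 i = true) with hP
    have hPne : P.Nonempty :=
      ⟨c₁, Finset.mem_filter.mpr ⟨hc₁, fun i hi => (hs₁ i hi).symm⟩⟩
    obtain ⟨cm, hcmP, hmin⟩ := P.exists_min_image (fun c => c.1.card) hPne
    have hcmD : cm ∈ D := (Finset.mem_filter.mp hcmP).1
    have hcmT : ∀ i ∈ cm.1, cm.2 i = true := (Finset.mem_filter.mp hcmP).2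
    set m₁ := cm.1.card with hm₁
    have hm1k : k ≤ m₁ := (hsize cm hcmD).1
    have hm1u : m₁ ≤ u := (hsize cm hcmD).2
    obtain ⟨T, -, hTcard⟩ := Finset.exists_subset_card_eq (s := (Finset.univ : Finset (Fin n))) (n := m₁ - 1)
      (by simp only [Finset.card_univ, Fintype.card_fin]; omega)
    set a : Fin n → Bool := fun i => if i ∈ T then true else false with ha
    obtain ⟨c, hc, hsat⟩ := htauto a
    have hck : k ≤ c.1.card := (hsize c hc).1
    have hcu : c.1.card ≤ u := (hsize c hc).2
    have hne : c.1.Nonempty := Finset.card_pos.mp (by omega)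
    obtain ⟨i₀, hi₀⟩ := hne
    by_cases hb : c.2 i₀ = true
    · have hcP : c ∈ P := Finset.mem_filter.mpr
        ⟨hc, fun i hi => (constOnSupport hdist hinv hc hi hi₀).trans hb⟩
      have hsubT : c.1 ⊆ T := by
        intro i hi
        have h1 : c.2 i = true := (constOnSupport hdist hinv hc hi hi₀).trans hb
        have h2 := hsat i hi
        rw [h1] at h2
        by_contra hiT
        simp [ha, hiT] at h2
      have h3 : c.1.card ≤ m₁ - 1 := hTcard ▸ Finset.card_le_card hsubT
      have h4 := hmin c hcP
      omega
    · have hbf : c.2 i₀ = false := by simpa using hb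
      have hsub : c.1 ⊆ Tᶜ := by
        intro i hi
        refine Finset.mem_compl.mpr ?_
        have h1 : c.2 i = false := (constOnSupport hdist hinv hc hi hi₀).trans hbf
        have h2 := hsat i hi
        rw [h1] at h2
        intro hiT
        simp [ha, hiT] at h2
      have hle : c.1.card ≤ n - (m₁ - 1) := by
        have := Finset.card_le_card hsub
        rwa [Finset.card_compl, hTcard, Fintype.card_fin] at this
      have hcm_ne : cm.1.Nonempty := Finset.card_pos.mp (by omega)
      obtain ⟨j₀, hj₀⟩ := hcm_ne
      have hd : m₁ ≠ c.1.card :=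
        sizesDiffer hdist hinv hcmD hc hj₀ (hcmT j₀ hj₀) hi₀ hbf
      omega
  · intro hkle
    set D : Finset (Cube n) :=
      (Finset.univ.powersetCard k).image (fun S => (S, fun _ => true)) ∪
      (Finset.univ.powersetCard (k + 1)).image (fun S => (S, fun _ => false)) with hD
    have hmem : ∀ c : Cube n, c ∈ D ↔
        (c.1.card = k ∧ c.2 = fun _ => true) ∨ (c.1.card = k + 1 ∧ c.2 = fun _ => false) := by
      intro c
      simp only [hD, Finset.mem_union, Finset.mem_image, Finset.mem_powersetCard_univ,
        Prod.ext_iff]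
      constructor
      · rintro (⟨S, hS, h1, h2⟩ | ⟨S, hS, h1, h2⟩)
        · exact Or.inl ⟨h1 ▸ hS, h2.symm⟩
        · exact Or.inr ⟨h1 ▸ hS, h2.symm⟩
      · rintro (⟨h1, h2⟩ | ⟨h1, h2⟩)
        · exact Or.inl ⟨c.1, h1, rfl, h2.symm⟩
        · exact Or.inr ⟨c.1, h1, rfl, h2.symm⟩
    refine ⟨D, ?_, ?_, ?_, ?_⟩
    · intro c hc c' hc' heq
      rcases (hmem c).mp hc with ⟨h1, h2⟩ | ⟨h1, h2⟩ <;>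
        rcases (hmem c').mp hc' with ⟨h1', h2'⟩ | ⟨h1', h2'⟩
      · exact Prod.ext heq (h2.trans h2'.symm)
      · rw [heq, h1'] at h1; omega
      · rw [heq, h1'] at h1; omega
      · exact Prod.ext heq (h2.trans h2'.symm)
    · intro a
      set T := Finset.univ.filter (fun i => a i = true) with hT
      by_cases hTk : k ≤ T.card
      · obtain ⟨S, hS, hScard⟩ := Finset.exists_subset_card_eq (s := T) (n := k) hTk
        refine ⟨(S, fun _ => true), (hmem _).mpr (Or.inl ⟨hScard, rfl⟩), ?_⟩
        intro i hi
        exact (Finset.mem_filter.mp (hS hi)).2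
      · set F := Finset.univ.filter (fun i => ¬ a i = true) with hF
        have hTF : T.card + F.card = n := by
          rw [hT, hF, Finset.card_filter_add_card_filter_not,
            Finset.card_univ, Fintype.card_fin]
        have hFk : k + 1 ≤ F.card := by omega
        obtain ⟨S, hS, hScard⟩ := Finset.exists_subset_card_eq (s := F) (n := k + 1) hFk
        refine ⟨(S, fun _ => false), (hmem _).mpr (Or.inr ⟨hScard, rfl⟩), ?_⟩
        intro i hi
        have := (Finset.mem_filter.mp (hS hi)).2
        simpa using this
    · intro σ c hc
      rcases (hmem c).mp hc with ⟨h1, h2⟩ | ⟨h1, h2⟩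
      · refine ⟨(c.1.image σ, fun _ => true), (hmem _).mpr (Or.inl
          ⟨by rw [Finset.card_image_of_injective _ σ.injective, h1], rfl⟩), rfl, ?_⟩
        intro i _
        simp [permCube, h2]
      · refine ⟨(c.1.image σ, fun _ => false), (hmem _).mpr (Or.inr
          ⟨by rw [Finset.card_image_of_injective _ σ.injective, h1], rfl⟩), rfl, ?_⟩
        intro i _
        simp [permCube, h2]
    · intro c hc
      rcases (hmem c).mp hc with ⟨h1, -⟩ | ⟨h1, -⟩ <;> omega
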